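/- Let S be a finite set of endomorphisms of projective N-space over the algebraic closure of Q, all of degree at least 2, let ν be a strictly positive probability measure on S, and let (Φ_S, ν̄) be the space of i.i.d. sequences distributed according to ν. Then a point P ∈ P^N(Q̄) is almost surely wandering for (S, ν) if and only if the expected canonical height E_ν̄[ĥ](Q) is strictly positive for every point Q in the S-orbit Orb_S(P). Equivalently, P fails to be almost surely wandering if and only if some Q ∈ Orb_S(P) has finite S-orbit. -/

import Mathlib

/-!
Statement 7 (Theorem `a.s`): characterization of almost surely wandering points
via the expected canonical height.

Abstract model: `Pt` is `ℙ^N(ℚ̄)`, `M` the monoid of endomorphisms acting on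
`Pt`, `deg : M → ℕ` the (multiplicative) degree, `h : Pt → ℝ` the absolute Weil
height (nonnegative, with a uniform functoriality constant `C` for the finitely
many maps in `S`, and satisfying Northcott-type finiteness on orbits: orbits lie
in `ℙ^N(K)` for a fixed number field `K`, so their subsets of bounded height are
finite).

`S` is a finite set of endomorphisms of degree ≥ 2, given by `F : S → M`; `ν`
is a strictly positive probability measure on `S`; `Φ_S = ℕ → S` carries the
i.i.d. product measure `μ = ν̄` (characterized on cylinder sets).

`seqOrbit F P γ` is `Orb_γ(P)`; `totalOrbit F P = Orb_S(P) = ⋃_γ Orb_γ(P)`;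
`hhat F deg h γ Q = ĥ_γ(Q) = lim_n h(γ_n(Q))/deg(γ_n)` (written as a `limsup`,
which is the limit since the limit exists for height controlled `S`); the
expected canonical height is `E_ν̄[ĥ](Q) = ∫ ĥ_γ(Q) dν̄(γ)`.
-/

open MeasureTheory Filter

/-- `γ_n = θ_n ∘ θ_{n-1} ∘ ⋯ ∘ θ_1` for the sequence `γ = (θ_1, θ_2, …)`,
`θ_{i+1} = γ i`; by convention `γ_0 = id`. -/
def seqComp {S M : Type*} [Monoid M] (F : S → M) (γ : ℕ → S) : ℕ → M
  | 0 => 1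
  | n + 1 => F (γ n) * seqComp F γ n

/-- `Orb_γ(P) = {P, γ_1(P), γ_2(P), …}`. -/
def seqOrbit {S Pt M : Type*} [Monoid M] [MulAction M Pt]
    (F : S → M) (P : Pt) (γ : ℕ → S) : Set Pt :=
  Set.range fun n : ℕ => seqComp F γ n • P

/-- The total `S`-orbit `Orb_S(P) = ⋃_{γ ∈ Φ_S} Orb_γ(P)`. -/
def totalOrbit {S Pt M : Type*} [Monoid M] [MulAction M Pt]
    (F : S → M) (P : Pt) : Set Pt :=
  ⋃ γ : ℕ → S, seqOrbit F P γ

/-- The canonical height `ĥ_γ(Q) = lim_n h(γ_n(Q))/deg(γ_n)` of the pair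
`(γ, Q)` (the limit exists since `S` is height controlled, so it equals this
`limsup`). -/
noncomputable def hhat {S Pt M : Type*} [Monoid M] [MulAction M Pt]
    (F : S → M) (deg : M → ℕ) (h : Pt → ℝ) (γ : ℕ → S) (Q : Pt) : ℝ :=
  limsup (fun n : ℕ => h (seqComp F γ n • Q) / (deg (seqComp F γ n) : ℝ)) atTop

open Topology
open scoped ENNReal NNReal

section Part1

variable {S Pt M : Type*} [Monoid M] [MulAction M Pt]
variable (F : S → M) (deg : M → ℕ) (h : Pt → ℝ)

theorem seqComp_congr {γ γ' : ℕ → S} {n : ℕ}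
    (hγ : ∀ i < n, γ i = γ' i) : seqComp F γ n = seqComp F γ' n := by
  induction n with
  | zero => rfl
  | succ n ih =>
      show F (γ n) * _ = F (γ' n) * _
      rw [hγ n (Nat.lt_succ_self n), ih fun i hi => hγ i (hi.trans (Nat.lt_succ_self n))]

theorem seqComp_add (γ : ℕ → S) (n m : ℕ) :
    seqComp F γ (n + m) = seqComp F (fun i => γ (n + i)) m * seqComp F γ n := by
  induction m with
  | zero => simp [seqComp]
  | succ m ih =>
      show F (γ (n + m)) * seqComp F γ (n + m) = _
      rw [ih]
      show _ = F (γ (n + m)) * seqComp F (fun i => γ (n + i)) m * seqComp F γ n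
      rw [mul_assoc]

variable (hdeg_id : deg 1 = 1)
    (hdeg_comp : ∀ f g : M, deg (f * g) = deg f * deg g)
    (hdeg2 : ∀ s : S, 2 ≤ deg (F s))

section deg
include hdeg_id hdeg_comp hdeg2

theorem two_pow_le_deg (γ : ℕ → S) (n : ℕ) : 2 ^ n ≤ deg (seqComp F γ n) := by
  induction n with
  | zero => simp [seqComp, hdeg_id]
  | succ n ih =>
      show 2 ^ n * 2 ≤ deg (F (γ n) * seqComp F γ n)
      rw [hdeg_comp]
      calc 2 ^ n * 2 ≤ deg (F (γ n)) * 2 ^ n := by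
            rw [mul_comm]; exact Nat.mul_le_mul (hdeg2 _) le_rfl
        _ ≤ _ := Nat.mul_le_mul le_rfl ih

theorem deg_seqComp_pos (γ : ℕ → S) (n : ℕ) : 0 < deg (seqComp F γ n) :=
  lt_of_lt_of_le (pow_pos (by norm_num) n) (two_pow_le_deg F deg hdeg_id hdeg_comp hdeg2 γ n)

theorem deg_le_deg_add (γ : ℕ → S) (n m : ℕ) :
    2 ^ m * deg (seqComp F γ n) ≤ deg (seqComp F γ (n + m)) := by
  rw [seqComp_add, hdeg_comp]
  exact Nat.mul_le_mul (two_pow_le_deg F deg hdeg_id hdeg_comp hdeg2 _ m) le_rfl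

end deg

end Part1

section Part1b

variable {S Pt M : Type*} [Monoid M] [MulAction M Pt]
variable (F : S → M) (deg : M → ℕ) (h : Pt → ℝ)
variable (hdeg_id : deg 1 = 1)
    (hdeg_comp : ∀ f g : M, deg (f * g) = deg f * deg g)
    (hdeg2 : ∀ s : S, 2 ≤ deg (F s))
    (hheight_nonneg : ∀ Q : Pt, 0 ≤ h Q)
    (C : ℝ) (hC : ∀ (s : S) (Q : Pt), |h (F s • Q) - (deg (F s) : ℝ) * h Q| ≤ C)

/-- The height quotient sequence. -/
noncomputable def hq (γ : ℕ → S) (Q : Pt) (n : ℕ) : ℝ :=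
  h (seqComp F γ n • Q) / (deg (seqComp F γ n) : ℝ)

include hdeg_id hdeg_comp hdeg2 hC in
theorem hq_one_step (γ : ℕ → S) (Q : Pt) (k : ℕ) :
    |hq F deg h γ Q (k + 1) - hq F deg h γ Q k| ≤ C / (deg (seqComp F γ (k + 1)) : ℝ) := by
  have dpos := deg_seqComp_pos F deg hdeg_id hdeg_comp hdeg2 γ k
  have hd : (deg (seqComp F γ (k + 1)) : ℝ) = (deg (F (γ k)) : ℝ) * (deg (seqComp F γ k) : ℝ) := by
    show ((deg (F (γ k) * seqComp F γ k) : ℕ) : ℝ) = _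
    rw [hdeg_comp]; push_cast; ring
  have hsm : seqComp F γ (k + 1) • Q = F (γ k) • (seqComp F γ k • Q) := by
    show (F (γ k) * seqComp F γ k) • Q = _; rw [mul_smul]
  have hdk : (0:ℝ) < (deg (seqComp F γ k) : ℝ) := by exact_mod_cast dpos
  have hdF : (0:ℝ) < (deg (F (γ k)) : ℝ) := by
    have := hdeg2 (γ k); exact_mod_cast lt_of_lt_of_le (by norm_num) this
  have key : hq F deg h γ Q (k + 1) - hq F deg h γ Q k
      = (h (F (γ k) • (seqComp F γ k • Q)) - (deg (F (γ k)) : ℝ) * h (seqComp F γ k • Q))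
        / ((deg (F (γ k)) : ℝ) * (deg (seqComp F γ k) : ℝ)) := by
    rw [hq, hq, hsm, hd]; field_simp
  rw [key, hd, abs_div,
    abs_of_pos (show (0:ℝ) < (deg (F (γ k)) : ℝ) * (deg (seqComp F γ k) : ℝ) by positivity)]
  gcongr
  exact hC _ _

include hdeg_id hdeg_comp hdeg2 hC in
theorem hq_abs_est (γ : ℕ → S) (Q : Pt) (hC0 : 0 ≤ C) (n m : ℕ) :
    |hq F deg h γ Q (n + m) - hq F deg h γ Q n|
      ≤ C * (1 - (1/2 : ℝ) ^ m) / (deg (seqComp F γ n) : ℝ) := by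
  have hdn : (0:ℝ) < (deg (seqComp F γ n) : ℝ) := by
    exact_mod_cast deg_seqComp_pos F deg hdeg_id hdeg_comp hdeg2 γ n
  induction m with
  | zero => simp
  | succ m ih =>
      have h1 := hq_one_step F deg h hdeg_id hdeg_comp hdeg2 C hC γ Q (n + m)
      have hdn2 : (0:ℝ) < (deg (seqComp F γ (n + (m+1))) : ℝ) := by
        exact_mod_cast deg_seqComp_pos F deg hdeg_id hdeg_comp hdeg2 γ (n + (m+1))
      have hdd : (2:ℝ) ^ (m+1) * (deg (seqComp F γ n) : ℝ) ≤ (deg (seqComp F γ (n + (m+1))) : ℝ) := by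
        exact_mod_cast deg_le_deg_add F deg hdeg_id hdeg_comp hdeg2 γ n (m+1)
      have hhalf : ((1:ℝ)/2)^(m+1) * 2^(m+1) = 1 := by
        rw [div_pow, one_pow, div_mul_cancel₀ _ (by positivity)]
      have h2 : C / (deg (seqComp F γ (n + (m+1))) : ℝ)
          ≤ C * (1/2:ℝ)^(m+1) / (deg (seqComp F γ n) : ℝ) := by
        rw [div_le_div_iff₀ hdn2 hdn]
        calc C * (deg (seqComp F γ n) : ℝ)
            = (C * (1/2:ℝ)^(m+1)) * ((2:ℝ)^(m+1) * (deg (seqComp F γ n) : ℝ)) := by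
              linear_combination (-(C * ((deg (seqComp F γ n) : ℝ)))) * hhalf
          _ ≤ (C * (1/2:ℝ)^(m+1)) * (deg (seqComp F γ (n + (m+1))) : ℝ) :=
              mul_le_mul_of_nonneg_left hdd (by positivity)
      calc |hq F deg h γ Q (n + (m+1)) - hq F deg h γ Q n|
          ≤ C / (deg (seqComp F γ (n + (m+1))) : ℝ)
            + C * (1 - (1/2:ℝ)^m) / (deg (seqComp F γ n) : ℝ) :=
            (abs_sub_le _ (hq F deg h γ Q (n+m)) _).trans (add_le_add h1 ih)
        _ ≤ C * (1/2:ℝ)^(m+1) / (deg (seqComp F γ n) : ℝ)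
            + C * (1 - (1/2:ℝ)^m) / (deg (seqComp F γ n) : ℝ) := add_le_add h2 le_rfl
        _ = C * (1 - (1/2:ℝ)^(m+1)) / (deg (seqComp F γ n) : ℝ) := by
            rw [← add_div]; congr 1; ring

end Part1b

section Part1c

variable {S Pt M : Type*} [Monoid M] [MulAction M Pt]
variable (F : S → M) (deg : M → ℕ) (h : Pt → ℝ)
variable (hdeg_id : deg 1 = 1)
    (hdeg_comp : ∀ f g : M, deg (f * g) = deg f * deg g)
    (hdeg2 : ∀ s : S, 2 ≤ deg (F s))
    (hheight_nonneg : ∀ Q : Pt, 0 ≤ h Q)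
    (C : ℝ) (hC : ∀ (s : S) (Q : Pt), |h (F s • Q) - (deg (F s) : ℝ) * h Q| ≤ C)

theorem hhat_eq (γ : ℕ → S) (Q : Pt) :
    hhat F deg h γ Q = limsup (hq F deg h γ Q) atTop := rfl

include hheight_nonneg in
theorem hq_nonneg (γ : ℕ → S) (Q : Pt) (n : ℕ) : 0 ≤ hq F deg h γ Q n :=
  div_nonneg (hheight_nonneg _) (Nat.cast_nonneg _)

include hdeg_id hdeg_comp hdeg2 hC in
theorem tendsto_hq_hhat (γ : ℕ → S) (Q : Pt) (hC0 : 0 ≤ C) :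
    Tendsto (hq F deg h γ Q) atTop (𝓝 (hhat F deg h γ Q)) := by
  have cauchy : CauchySeq (hq F deg h γ Q) := by
    apply cauchySeq_of_le_geometric (1/2 : ℝ) C (by norm_num)
    intro k
    have est := hq_abs_est F deg h hdeg_id hdeg_comp hdeg2 C hC γ Q hC0 k 1
    have hd : (0:ℝ) < (deg (seqComp F γ k) : ℝ) := by
      exact_mod_cast deg_seqComp_pos F deg hdeg_id hdeg_comp hdeg2 γ k
    have h2k : (2:ℝ)^k ≤ (deg (seqComp F γ k) : ℝ) := by
      exact_mod_cast two_pow_le_deg F deg hdeg_id hdeg_comp hdeg2 γ k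
    calc dist (hq F deg h γ Q k) (hq F deg h γ Q (k+1))
        = |hq F deg h γ Q (k+1) - hq F deg h γ Q k| := by rw [Real.dist_eq, abs_sub_comm]
      _ ≤ C * (1 - (1/2:ℝ)^1) / (deg (seqComp F γ k) : ℝ) := est
      _ = C * (1/2:ℝ) / (deg (seqComp F γ k) : ℝ) := by norm_num
      _ ≤ C * (1/2:ℝ) / (2:ℝ)^k := by gcongr
      _ ≤ C * (1/2:ℝ)^k := by
          rw [div_le_iff₀ (by positivity)]
          have hcan : ((1:ℝ)/2)^k * 2^k = 1 := by
            rw [div_pow, one_pow, div_mul_cancel₀ _ (by positivity)]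
          nlinarith [hcan]
  obtain ⟨x, hx⟩ := cauchySeq_tendsto_of_complete cauchy
  rwa [hhat_eq, hx.limsup_eq]

include hdeg_id hdeg_comp hdeg2 hheight_nonneg hC in
theorem hhat_nonneg (γ : ℕ → S) (Q : Pt) (hC0 : 0 ≤ C) : 0 ≤ hhat F deg h γ Q :=
  ge_of_tendsto' (tendsto_hq_hhat F deg h hdeg_id hdeg_comp hdeg2 C hC γ Q hC0)
    (hq_nonneg F deg h hheight_nonneg γ Q)

include hdeg_id hdeg_comp hdeg2 hC in
theorem hhat_lower (γ : ℕ → S) (Q : Pt) (hC0 : 0 ≤ C) (n : ℕ) :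
    hq F deg h γ Q n - C / (deg (seqComp F γ n) : ℝ) ≤ hhat F deg h γ Q := by
  have hd : (0:ℝ) < (deg (seqComp F γ n) : ℝ) := by
    exact_mod_cast deg_seqComp_pos F deg hdeg_id hdeg_comp hdeg2 γ n
  refine ge_of_tendsto (tendsto_hq_hhat F deg h hdeg_id hdeg_comp hdeg2 C hC γ Q hC0) ?_
  filter_upwards [eventually_ge_atTop n] with m hm
  obtain ⟨p, rfl⟩ := Nat.exists_eq_add_of_le hm
  have est := hq_abs_est F deg h hdeg_id hdeg_comp hdeg2 C hC γ Q hC0 n p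
  have h1 : C * (1 - (1/2:ℝ)^p) / (deg (seqComp F γ n) : ℝ)
      ≤ C / (deg (seqComp F γ n) : ℝ) := by
    gcongr
    nlinarith [pow_nonneg (by norm_num : (0:ℝ) ≤ 1/2) p]
  have := abs_sub_le_iff.mp est
  linarith [this.2]

include hdeg_id hdeg_comp hdeg2 hC in
theorem hhat_le (γ : ℕ → S) (Q : Pt) (hC0 : 0 ≤ C) : hhat F deg h γ Q ≤ h Q + C := by
  refine le_of_tendsto (tendsto_hq_hhat F deg h hdeg_id hdeg_comp hdeg2 C hC γ Q hC0)
    (Eventually.of_forall fun n => ?_)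
  have est := hq_abs_est F deg h hdeg_id hdeg_comp hdeg2 C hC γ Q hC0 0 n
  have h0 : hq F deg h γ Q 0 = h Q := by
    show h ((1:M) • Q) / ((deg (1:M) : ℕ) : ℝ) = h Q
    rw [one_smul, hdeg_id]; norm_num
  have hd0 : ((deg (seqComp F γ 0) : ℕ) : ℝ) = 1 := by
    show ((deg (1:M) : ℕ) : ℝ) = 1; rw [hdeg_id]; norm_num
  rw [hd0] at est
  have h1 : C * (1 - (1/2:ℝ)^n) / 1 ≤ C := by
    rw [div_one]
    nlinarith [pow_nonneg (by norm_num : (0:ℝ) ≤ 1/2) n]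
  have h2 := (abs_sub_le_iff.mp est).1
  have : (0:ℕ) + n = n := by ring
  rw [this] at h2
  linarith

include hdeg_id hdeg_comp hdeg2 hC in
theorem height_le_of_hhat_eq_zero (γ : ℕ → S) (Q : Pt) (hC0 : 0 ≤ C)
    (hz : hhat F deg h γ Q = 0) (n : ℕ) : h (seqComp F γ n • Q) ≤ C := by
  have hd : (0:ℝ) < (deg (seqComp F γ n) : ℝ) := by
    exact_mod_cast deg_seqComp_pos F deg hdeg_id hdeg_comp hdeg2 γ n
  have hl := hhat_lower F deg h hdeg_id hdeg_comp hdeg2 C hC γ Q hC0 n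
  rw [hz] at hl
  have : hq F deg h γ Q n ≤ C / (deg (seqComp F γ n) : ℝ) := by linarith
  rw [hq, div_le_div_iff₀ hd hd] at this
  exact le_of_mul_le_mul_right this hd

include hdeg_id hdeg_comp hdeg2 hheight_nonneg hC in
theorem hhat_eq_zero_of_finite (γ : ℕ → S) (Q : Pt) (hC0 : 0 ≤ C)
    (hfin : (seqOrbit F Q γ).Finite) : hhat F deg h γ Q = 0 := by
  obtain ⟨B, hB⟩ := (hfin.image h).bddAbove
  have hmem : ∀ n : ℕ, h (seqComp F γ n • Q) ≤ B := fun n =>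
    hB ⟨seqComp F γ n • Q, ⟨n, rfl⟩, rfl⟩
  have hB0 : 0 ≤ B := le_trans (hheight_nonneg _) (hmem 0)
  have hsq : Tendsto (hq F deg h γ Q) atTop (𝓝 0) := by
    apply squeeze_zero (hq_nonneg F deg h hheight_nonneg γ Q) (g := fun n => B * (1/2:ℝ)^n)
    · intro n
      have hd : (0:ℝ) < (deg (seqComp F γ n) : ℝ) := by
        exact_mod_cast deg_seqComp_pos F deg hdeg_id hdeg_comp hdeg2 γ n
      have h2k : (2:ℝ)^n ≤ (deg (seqComp F γ n) : ℝ) := by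
        exact_mod_cast two_pow_le_deg F deg hdeg_id hdeg_comp hdeg2 γ n
      calc hq F deg h γ Q n ≤ B / (deg (seqComp F γ n) : ℝ) := by
            rw [hq]; gcongr
            exact hmem n
        _ ≤ B / (2:ℝ)^n := by gcongr
        _ = B * (1/2:ℝ)^n := by rw [one_div, inv_pow, div_eq_mul_inv]
    · simpa using (tendsto_pow_atTop_nhds_zero_of_lt_one (by norm_num : (0:ℝ) ≤ 1/2)
        (by norm_num : (1/2:ℝ) < 1)).const_mul B
  exact tendsto_nhds_unique
    (tendsto_hq_hhat F deg h hdeg_id hdeg_comp hdeg2 C hC γ Q hC0) hsq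

theorem seqOrbit_subset_totalOrbit (Q : Pt) (γ : ℕ → S) :
    seqOrbit F Q γ ⊆ totalOrbit F Q :=
  Set.subset_iUnion (seqOrbit F Q) γ

theorem totalOrbit_trans {P Q : Pt} (hQ : Q ∈ totalOrbit F P) :
    totalOrbit F Q ⊆ totalOrbit F P := by
  obtain ⟨Sγ, ⟨γ, rfl⟩, n, rfl⟩ := hQ
  rintro R ⟨Sγ', ⟨γ', rfl⟩, m, rfl⟩
  refine ⟨_, ⟨fun i => if i < n then γ i else γ' (i - n), rfl⟩, n + m, ?_⟩
  show seqComp F (fun i => if i < n then γ i else γ' (i - n)) (n + m) • P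
    = seqComp F γ' m • (seqComp F γ n • P)
  rw [seqComp_add, mul_smul]
  have e1 : seqComp F (fun i => if n + i < n then γ (n + i) else γ' (n + i - n)) m
      = seqComp F γ' m := by
    apply seqComp_congr
    intro i hi
    have h1 : ¬ (n + i < n) := by omega
    rw [if_neg h1]
    congr 1
    omega
  have e2 : seqComp F (fun i => if i < n then γ i else γ' (i - n)) n = seqComp F γ n := by
    apply seqComp_congr
    intro i hi
    exact if_pos hi
  show seqComp F (fun i => if n + i < n then γ (n + i) else γ' (n + i - n)) m •
    (seqComp F (fun i => if i < n then γ i else γ' (i - n)) n • P) = _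
  rw [e1, e2]

end Part1c

section Part2

set_option linter.unusedSectionVars false

variable {S : Type*} [Fintype S] [MeasurableSpace S] [DiscreteMeasurableSpace S]
variable (ν : Measure S) [IsProbabilityMeasure ν]
variable (μ : Measure (ℕ → S)) [IsProbabilityMeasure μ]

/-- The cylinder set given by a word. -/
def cylSet (n : ℕ) (u : Fin n → S) : Set (ℕ → S) := {γ | ∀ i : Fin n, γ (i : ℕ) = u i}

theorem cylSet_measurable (n : ℕ) (u : Fin n → S) : MeasurableSet (cylSet n u) := by
  have : cylSet n u = ⋂ i : Fin n, (fun γ : ℕ → S => γ (i : ℕ)) ⁻¹' {u i} := by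
    ext γ; simp [cylSet]
  rw [this]
  exact MeasurableSet.iInter fun i => (measurable_pi_apply _) (measurableSet_singleton _)

theorem cylSet_measure
    (hiid : ∀ (n : ℕ) (A : Fin n → Set S),
      μ {γ | ∀ i : Fin n, γ i ∈ A i} = ∏ i, ν (A i))
    (n : ℕ) (u : Fin n → S) : μ (cylSet n u) = ∏ i, ν {u i} := by
  rw [← hiid n (fun i => {u i})]
  congr 1

theorem cylSet_measure_ne_zero
    (hiid : ∀ (n : ℕ) (A : Fin n → Set S),
      μ {γ | ∀ i : Fin n, γ i ∈ A i} = ∏ i, ν (A i))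
    (hpos : ∀ s : S, 0 < ν {s})
    (n : ℕ) (u : Fin n → S) : μ (cylSet n u) ≠ 0 := by
  rw [cylSet_measure ν μ hiid n u]
  exact (CanonicallyOrderedAdd.prod_pos.mpr fun i _ => hpos (u i)).ne'

/-- Extension of a word to an infinite sequence. -/
def extSeq (s₀ : S) (n : ℕ) (u : Fin n → S) : ℕ → S :=
  fun i => if h : i < n then u ⟨i, h⟩ else s₀

theorem extSeq_eq (s₀ : S) (n : ℕ) (u : Fin n → S) (i : ℕ) (hi : i < n) :
    extSeq s₀ n u i = u ⟨i, hi⟩ := dif_pos hi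

open Classical in
theorem measure_prefix (s₀ : S)
    (hiid : ∀ (n : ℕ) (A : Fin n → Set S),
      μ {γ | ∀ i : Fin n, γ i ∈ A i} = ∏ i, ν (A i))
    (n : ℕ) (Φ : (ℕ → S) → Prop)
    (hΦ : ∀ γ γ' : ℕ → S, (∀ i < n, γ i = γ' i) → Φ γ → Φ γ') :
    μ {γ | Φ γ} = ∑ u : Fin n → S,
      Set.indicator {u : Fin n → S | Φ (extSeq s₀ n u)}
        (fun u => ∏ i, ν {u i}) u := by
  have hconv : ∀ u : Fin n → S,
      Set.indicator {u : Fin n → S | Φ (extSeq s₀ n u)} (fun u => ∏ i, ν {u i}) u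
        = if Φ (extSeq s₀ n u) then ∏ i, ν {u i} else 0 := fun u => by
    by_cases hc : Φ (extSeq s₀ n u)
    · rw [Set.indicator_of_mem
        (show u ∈ {u : Fin n → S | Φ (extSeq s₀ n u)} from hc), if_pos hc]
    · rw [Set.indicator_of_notMem
        (show u ∉ {u : Fin n → S | Φ (extSeq s₀ n u)} from hc), if_neg hc]
  rw [Finset.sum_congr rfl fun u _ => hconv u, ← Finset.sum_filter]
  have hset : {γ | Φ γ} = ⋃ u ∈ Finset.univ.filter (fun u : Fin n → S => Φ (extSeq s₀ n u)),
      cylSet n u := by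
    ext γ
    simp only [Set.mem_setOf_eq, Set.mem_iUnion, Finset.mem_filter, Finset.mem_univ, true_and]
    constructor
    · intro hγ
      refine ⟨fun i => γ (i : ℕ), ?_, fun i => rfl⟩
      refine hΦ γ _ (fun i hi => ?_) hγ
      rw [extSeq_eq s₀ n _ i hi]
    · rintro ⟨u, hu, hcyl⟩
      refine hΦ (extSeq s₀ n u) γ (fun i hi => ?_) hu
      rw [extSeq_eq s₀ n u i hi, hcyl ⟨i, hi⟩]
  rw [hset, measure_biUnion_finset ?_ fun u _ => cylSet_measurable n u]
  · exact Finset.sum_congr rfl fun u _ => cylSet_measure ν μ hiid n u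
  · intro u _ v _ huv
    rw [Function.onFun, Set.disjoint_left]
    intro γ hγu hγv
    exact huv (funext fun i => by rw [← hγu i, ← hγv i])

theorem sum_singleton_eq_one : ∑ s : S, ν {s} = 1 := by
  classical
  have : (Set.univ : Set S) = ⋃ s ∈ (Finset.univ : Finset S), {s} := by ext s; simp
  rw [← measure_univ (μ := ν), this, measure_biUnion_finset]
  · intro u _ v _ huv
    rw [Function.onFun]
    exact Set.disjoint_singleton.mpr huv
  · exact fun s _ => measurableSet_singleton s

theorem sum_words_eq_one (L : ℕ) : ∑ e : Fin L → S, ∏ i, ν {e i} = 1 := by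
  classical
  rw [← Fintype.prod_sum (κ := fun _ : Fin L => S) (f := fun _ s => ν {s})]
  simp [sum_singleton_eq_one ν]

end Part2

section Part3

set_option linter.unusedSectionVars false
set_option maxHeartbeats 1000000

open Classical

variable {S Pt M : Type*} [Monoid M] [MulAction M Pt] [Fintype S]
  [MeasurableSpace S] [DiscreteMeasurableSpace S]

theorem key_escape
    (F : S → M) (h : Pt → ℝ) (C : ℝ) (P : Pt) (s0 : S)
    (hNorthcott : {R ∈ totalOrbit F P | h R ≤ C}.Finite)
    (ν : Measure S) [IsProbabilityMeasure ν]
    (hpos : ∀ s : S, 0 < ν {s})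
    (μ : Measure (ℕ → S)) [IsProbabilityMeasure μ]
    (hiid : ∀ (n : ℕ) (A : Fin n → Set S),
      μ {γ | ∀ i : Fin n, γ i ∈ A i} = ∏ i, ν (A i))
    (hne : μ {γ | ∀ n, h (seqComp F γ n • P) ≤ C} ≠ 0) :
    ∃ Q ∈ totalOrbit F P, ∀ R ∈ totalOrbit F Q, h R ≤ C := by
  by_contra hcon
  push_neg at hcon
  -- choose escape words
  have hch : ∀ Q : Pt, ∃ (w : ℕ → S) (mq : ℕ),
      Q ∈ totalOrbit F P → C < h (seqComp F w mq • Q) := by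
    intro Q
    by_cases hQ : Q ∈ totalOrbit F P
    · obtain ⟨R, hR, hCR⟩ := hcon Q hQ
      obtain ⟨_, ⟨wq, rfl⟩, mq, rfl⟩ := hR
      exact ⟨wq, mq, fun _ => hCR⟩
    · exact ⟨fun _ => s0, 0, fun hc => absurd hc hQ⟩
  choose w mq hwm using hch
  set T := {R ∈ totalOrbit F P | h R ≤ C} with hTdef
  set L := hNorthcott.toFinset.sup mq + 1 with hLdef
  have hmL : ∀ Q ∈ T, mq Q < L :=
    fun Q hQ => Nat.lt_succ_of_le (Finset.le_sup (hNorthcott.mem_toFinset.mpr hQ))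
  set st : ℕ → (ℕ → S) → Pt := fun j γ => seqComp F γ (j * L) • P with hstdef
  set Good : ℕ → (ℕ → S) → Prop := fun k γ =>
    ∀ j < k, st j γ ∈ T ∧ ¬ (∀ i < L, γ (j * L + i) = w (st j γ) i) with hGdef
  -- E ⊆ Good k
  have hEG : ∀ k, {γ : ℕ → S | ∀ n, h (seqComp F γ n • P) ≤ C} ⊆ {γ | Good k γ} := by
    intro k γ hγ j hj
    have hst : st j γ ∈ T := ⟨⟨_, ⟨γ, rfl⟩, j * L, rfl⟩, hγ (j * L)⟩
    refine ⟨hst, fun hmatch => ?_⟩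
    have key : seqComp F γ (j * L + mq (st j γ)) • P
        = seqComp F (w (st j γ)) (mq (st j γ)) • st j γ := by
      rw [seqComp_add, mul_smul]
      congr 1
      apply seqComp_congr
      intro i hi
      exact hmatch i (lt_of_lt_of_le hi (le_of_lt (hmL _ hst)))
    have hle := hγ (j * L + mq (st j γ))
    rw [key] at hle
    exact absurd hle (not_le.mpr (hwm _ hst.1))
  -- dependence on finitely many coordinates
  have hdep : ∀ k (γ γ' : ℕ → S), (∀ i < k * L, γ i = γ' i) → Good k γ → Good k γ' := by
    intro k γ γ' hag hg j hj
    have hjL : (j + 1) * L ≤ k * L := Nat.mul_le_mul_right L hj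
    have hjL' : j * L ≤ k * L := Nat.mul_le_mul_right L (le_of_lt hj)
    have hst : st j γ' = st j γ := by
      show seqComp F γ' (j * L) • P = seqComp F γ (j * L) • P
      rw [seqComp_congr F (γ := γ') (γ' := γ)
        (fun i hi => (hag i (lt_of_lt_of_le hi hjL')).symm)]
    obtain ⟨h1, h2⟩ := hg j hj
    rw [hst]
    refine ⟨h1, fun hm => h2 fun i hi => ?_⟩
    rw [hag (j * L + i) (lt_of_lt_of_le (by rw [Nat.succ_mul] at hjL ⊢; omega) hjL)]
    exact hm i hi
  -- minimal singleton mass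
  obtain ⟨sm, -, hsm⟩ := Finset.exists_min_image Finset.univ (fun s => ν {s})
    ⟨s0, Finset.mem_univ s0⟩
  set δ : ℝ≥0∞ := ν {sm} ^ L with hδdef
  have hδ0 : δ ≠ 0 := pow_ne_zero L (hpos sm).ne'
  have hr1 : (1 : ℝ≥0∞) - δ < 1 :=
    ENNReal.sub_lt_self ENNReal.one_ne_top one_ne_zero hδ0
  -- the main inductive bound
  have main : ∀ k, μ {γ | Good k γ} ≤ (1 - δ) ^ k := by
    intro k
    induction k with
    | zero =>
        simp only [pow_zero]
        exact le_trans (measure_mono (Set.subset_univ _)) (le_of_eq measure_univ)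
    | succ k ih =>
        set n := k * L with hn
        have hnL : (k + 1) * L = n + L := Nat.succ_mul k L
        -- succ decomposition of Good
        have hsucc : ∀ γ : ℕ → S, Good (k + 1) γ ↔ Good k γ ∧
            (st k γ ∈ T ∧ ¬ (∀ i < L, γ (k * L + i) = w (st k γ) i)) := by
          intro γ
          constructor
          · intro hg
            exact ⟨fun j hj => hg j (hj.trans (Nat.lt_succ_self k)), hg k (Nat.lt_succ_self k)⟩
          · rintro ⟨h1, h2⟩ j hj
            rcases Nat.lt_succ_iff_lt_or_eq.mp hj with hj' | rfl
            · exact h1 j hj'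
            · exact h2
        have hdep' : ∀ γ γ' : ℕ → S, (∀ i < n + L, γ i = γ' i) →
            Good (k+1) γ → Good (k+1) γ' := by
          intro γ γ' hag
          exact hdep (k+1) γ γ' (fun i hi => hag i (by rw [hnL] at hi; exact hi))
        rw [measure_prefix ν μ s0 hiid (n + L) (Good (k+1)) hdep']
        have hconvL : ∀ u : Fin (n + L) → S,
            Set.indicator {u : Fin (n + L) → S | Good (k+1) (extSeq s0 (n + L) u)}
              (fun u => ∏ i, ν {u i}) u
              = if Good (k+1) (extSeq s0 (n + L) u) then ∏ i, ν {u i} else 0 := fun u => by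
          by_cases hc : Good (k+1) (extSeq s0 (n + L) u)
          · rw [Set.indicator_of_mem
              (show u ∈ {u : Fin (n+L) → S | Good (k+1) (extSeq s0 (n+L) u)} from hc), if_pos hc]
          · rw [Set.indicator_of_notMem
              (show u ∉ {u : Fin (n+L) → S | Good (k+1) (extSeq s0 (n+L) u)} from hc), if_neg hc]
        have hconvn : ∀ u : Fin n → S,
            Set.indicator {u : Fin n → S | Good k (extSeq s0 n u)}
              (fun u => ∏ i, ν {u i}) u
              = if Good k (extSeq s0 n u) then ∏ i, ν {u i} else 0 := fun u => by
          by_cases hc : Good k (extSeq s0 n u)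
          · rw [Set.indicator_of_mem
              (show u ∈ {u : Fin n → S | Good k (extSeq s0 n u)} from hc), if_pos hc]
          · rw [Set.indicator_of_notMem
              (show u ∉ {u : Fin n → S | Good k (extSeq s0 n u)} from hc), if_neg hc]
        rw [Finset.sum_congr rfl fun v _ => hconvL v]
        -- pointwise analysis
        have happ : ∀ (u : Fin n → S) (e : Fin L → S),
            Fin.appendEquiv n L (u, e) = Fin.append u e := fun u e => rfl
        have hagree : ∀ (u : Fin n → S) (e : Fin L → S), ∀ i < n,
            extSeq s0 (n + L) (Fin.append u e) i = extSeq s0 n u i := by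
          intro u e i hi
          have hi' : i < n + L := lt_of_lt_of_le hi (Nat.le_add_right n L)
          rw [extSeq_eq s0 (n+L) _ i hi', extSeq_eq s0 n u i hi]
          have : (⟨i, hi'⟩ : Fin (n + L)) = Fin.castAdd L ⟨i, hi⟩ := rfl
          rw [this, Fin.append_left]
        have hblock : ∀ (u : Fin n → S) (e : Fin L → S) (i : ℕ) (hi : i < L),
            extSeq s0 (n + L) (Fin.append u e) (n + i) = e ⟨i, hi⟩ := by
          intro u e i hi
          have hi' : n + i < n + L := by omega
          rw [extSeq_eq s0 (n+L) _ (n+i) hi']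
          have : (⟨n + i, hi'⟩ : Fin (n + L)) = Fin.natAdd n ⟨i, hi⟩ := rfl
          rw [this, Fin.append_right]
        -- the state determined by u
        set Qu : (Fin n → S) → Pt := fun u => st k (extSeq s0 n u) with hQudef
        have hcond : ∀ (u : Fin n → S) (e : Fin L → S),
            Good (k+1) (extSeq s0 (n + L) (Fin.append u e)) ↔
            (Good k (extSeq s0 n u) ∧ (Qu u ∈ T ∧
              ¬ (∀ i : Fin L, e i = w (Qu u) (i : ℕ)))) := by
          intro u e
          set γv := extSeq s0 (n + L) (Fin.append u e) with hγv
          have hstv : st k γv = Qu u := by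
            show seqComp F γv (k * L) • P = seqComp F (extSeq s0 n u) (k * L) • P
            rw [seqComp_congr F (fun i hi => hagree u e i hi)]
          rw [hsucc γv]
          constructor
          · rintro ⟨h1, h2, h3⟩
            refine ⟨hdep k γv _ (fun i hi => hagree u e i hi) h1, by rwa [← hstv], ?_⟩
            intro hm
            apply h3
            intro i hi
            show γv (n + i) = w (st k γv) i
            rw [hγv, hblock u e i hi]
            rw [← hγv, hstv]
            exact hm ⟨i, hi⟩
          · rintro ⟨h1, h2, h3⟩
            refine ⟨hdep k _ γv (fun i hi => (hagree u e i hi).symm) h1, by rwa [hstv], ?_⟩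
            intro hm
            apply h3
            intro i
            have h4 : γv (n + (i : ℕ)) = w (st k γv) (i : ℕ) := hm (i : ℕ) i.isLt
            rw [hγv, hblock u e (i : ℕ) i.isLt] at h4
            rw [hstv] at h4
            simpa using h4
        -- product splits
        have hprod : ∀ (u : Fin n → S) (e : Fin L → S),
            (∏ i, ν {Fin.append u e i}) = (∏ i, ν {u i}) * ∏ i, ν {e i} := by
          intro u e
          rw [Fin.prod_univ_add (f := fun i => ν {Fin.append u e i})]
          congr 1
          · exact Finset.prod_congr rfl fun i _ => by rw [Fin.append_left]
          · exact Finset.prod_congr rfl fun i _ => by rw [Fin.append_right]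
        -- per-u estimate
        have hperu : ∀ u : Fin n → S,
            (∑ e : Fin L → S, if Good (k+1) (extSeq s0 (n + L) (Fin.append u e))
              then (∏ i, ν {u i}) * ∏ i, ν {e i} else 0)
            ≤ (if Good k (extSeq s0 n u) then ∏ i, ν {u i} else 0) * (1 - δ) := by
          intro u
          by_cases hGu : Good k (extSeq s0 n u)
          · by_cases hQT : Qu u ∈ T
            · set wv : Fin L → S := fun i => w (Qu u) (i : ℕ) with hwv
              have hcond' : ∀ e : Fin L → S,
                  (Good (k+1) (extSeq s0 (n + L) (Fin.append u e))) ↔ e ≠ wv := by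
                intro e
                rw [hcond u e]
                constructor
                · rintro ⟨-, -, h3⟩ rfl
                  exact h3 fun i => rfl
                · intro hne'
                  exact ⟨hGu, hQT, fun hm => hne' (funext fun i => hm i)⟩
              calc (∑ e : Fin L → S, if Good (k+1) (extSeq s0 (n + L) (Fin.append u e))
                    then (∏ i, ν {u i}) * ∏ i, ν {e i} else 0)
                  = ∑ e ∈ Finset.univ.filter (fun e : Fin L → S => e ≠ wv),
                      (∏ i, ν {u i}) * ∏ i, ν {e i} := by
                    simp only [Finset.sum_filter]
                    exact Finset.sum_congr rfl fun e _ => if_congr (hcond' e) rfl rfl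
                _ = ∑ e ∈ Finset.univ.erase wv, (∏ i, ν {u i}) * ∏ i, ν {e i} := by
                    apply Finset.sum_congr
                    · ext e
                      simp [Finset.mem_filter, Finset.mem_erase]
                    · intros; rfl
                _ = (∏ i, ν {u i}) * ∑ e ∈ Finset.univ.erase wv, ∏ i, ν {e i} := by
                    rw [Finset.mul_sum]
                _ ≤ (∏ i, ν {u i}) * (1 - δ) := by
                    apply mul_le_mul_right
                    have hsplit : (∏ i, ν {wv i}) + ∑ e ∈ Finset.univ.erase wv,
                        ∏ i, ν {e i} = 1 :=
                      (Finset.add_sum_erase Finset.univ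
                        (fun e : Fin L → S => ∏ i, ν {e i}) (Finset.mem_univ wv)).trans
                        (sum_words_eq_one ν L)
                    have hfin : (∏ i, ν {wv i}) ≠ ∞ := by
                      refine (ENNReal.prod_lt_top fun i _ => ?_).ne
                      exact measure_lt_top ν _
                    have h1 : ∑ e ∈ Finset.univ.erase wv, ∏ i, ν {e i}
                        ≤ 1 - ∏ i, ν {wv i} :=
                      ENNReal.le_sub_of_add_le_left hfin (le_of_eq hsplit)
                    refine h1.trans (tsub_le_tsub_left ?_ 1)
                    rw [hδdef]
                    calc ν {sm} ^ L = ∏ _i : Fin L, ν {sm} := by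
                          rw [Finset.prod_const, Finset.card_univ, Fintype.card_fin]
                      _ ≤ ∏ i, ν {wv i} :=
                          Finset.prod_le_prod' fun i _ => hsm _ (Finset.mem_univ _)
                _ = (if Good k (extSeq s0 n u) then ∏ i, ν {u i} else 0) * (1 - δ) := by
                    rw [if_pos hGu]
            · have hz : ∀ e : Fin L → S,
                  (if Good (k+1) (extSeq s0 (n + L) (Fin.append u e))
                    then (∏ i, ν {u i}) * ∏ i, ν {e i} else 0) = 0 := by
                intro e
                rw [if_neg]
                rw [hcond u e]
                rintro ⟨-, h2, -⟩
                exact hQT h2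
              rw [Finset.sum_congr rfl fun e _ => hz e, Finset.sum_const, smul_zero]
              exact zero_le
          · have hz : ∀ e : Fin L → S,
                (if Good (k+1) (extSeq s0 (n + L) (Fin.append u e))
                  then (∏ i, ν {u i}) * ∏ i, ν {e i} else 0) = 0 := by
              intro e
              rw [if_neg]
              rw [hcond u e]
              rintro ⟨h1, -⟩
              exact hGu h1
            rw [Finset.sum_congr rfl fun e _ => hz e, Finset.sum_const, smul_zero, if_neg hGu,
              zero_mul]
        -- put it together
        calc (∑ v : Fin (n + L) → S,
              if Good (k+1) (extSeq s0 (n + L) v) then ∏ i, ν {v i} else 0)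
            = ∑ p : (Fin n → S) × (Fin L → S),
              if Good (k+1) (extSeq s0 (n + L) (Fin.appendEquiv n L p))
                then ∏ i, ν {(Fin.appendEquiv n L p) i} else 0 :=
              (Fintype.sum_equiv (Fin.appendEquiv n L) _ _ (fun p => rfl)).symm
          _ = ∑ u : Fin n → S, ∑ e : Fin L → S,
              (if Good (k+1) (extSeq s0 (n + L) (Fin.appendEquiv n L (u, e)))
                then ∏ i, ν {(Fin.appendEquiv n L (u, e)) i} else 0) :=
              Fintype.sum_prod_type _
          _ = ∑ u : Fin n → S, ∑ e : Fin L → S,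
              (if Good (k+1) (extSeq s0 (n + L) (Fin.append u e))
                then (∏ i, ν {u i}) * ∏ i, ν {e i} else 0) := by
              refine Finset.sum_congr rfl fun u _ => Finset.sum_congr rfl fun e _ => ?_
              rw [happ u e]
              by_cases hc : Good (k+1) (extSeq s0 (n + L) (Fin.append u e))
              · rw [if_pos hc, if_pos hc, hprod u e]
              · rw [if_neg hc, if_neg hc]
          _ ≤ ∑ u : Fin n → S,
              (if Good k (extSeq s0 n u) then ∏ i, ν {u i} else 0) * (1 - δ) :=
              Finset.sum_le_sum fun u _ => hperu u
          _ = (∑ u : Fin n → S,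
              if Good k (extSeq s0 n u) then ∏ i, ν {u i} else 0) * (1 - δ) := by
              rw [Finset.sum_mul]
          _ = μ {γ | Good k γ} * (1 - δ) := by
              rw [measure_prefix ν μ s0 hiid n (Good k) (hdep k),
                Finset.sum_congr rfl fun u _ => hconvn u]
          _ ≤ (1 - δ) ^ k * (1 - δ) := mul_le_mul_left ih _
          _ = (1 - δ) ^ (k + 1) := (pow_succ _ _).symm
  -- conclude
  apply hne
  have hbound : ∀ k, μ {γ | ∀ n, h (seqComp F γ n • P) ≤ C} ≤ (1 - δ) ^ k :=
    fun k => le_trans (measure_mono (hEG k)) (main k)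
  have htend : Filter.Tendsto (fun k => (1 - δ) ^ k) Filter.atTop (𝓝 0) :=
    ENNReal.tendsto_pow_atTop_nhds_zero_of_lt_one hr1
  exact le_antisymm (ge_of_tendsto' htend hbound) zero_le

end Part3

theorem almost_surely_wandering_iff_expected_canonical_height_pos
    {S Pt M : Type*} [Monoid M] [MulAction M Pt] [Fintype S]
    [MeasurableSpace S] [DiscreteMeasurableSpace S]
    -- the finite set `S` of endomorphisms of `ℙ^N(ℚ̄)`, all of degree ≥ 2:
    (F : S → M) (deg : M → ℕ) (h : Pt → ℝ)
    (hdeg_id : deg 1 = 1)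
    (hdeg_comp : ∀ f g : M, deg (f * g) = deg f * deg g)
    (hdeg2 : ∀ s : S, 2 ≤ deg (F s))
    (hheight_nonneg : ∀ Q : Pt, 0 ≤ h Q)
    (C : ℝ) (hC : ∀ (s : S) (Q : Pt), |h (F s • Q) - (deg (F s) : ℝ) * h Q| ≤ C)
    -- Northcott: subsets of bounded height of an orbit are finite:
    (hNorthcott : ∀ (Q : Pt) (B : ℝ), {R ∈ totalOrbit F Q | h R ≤ B}.Finite)
    -- `ν` is a strictly positive probability measure on `S`:
    (ν : Measure S) [IsProbabilityMeasure ν]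
    (hpos : ∀ s : S, 0 < ν {s})
    -- `μ = ν̄` is the i.i.d. product measure on `Φ_S = ∏_{i=1}^∞ S`:
    (μ : Measure (ℕ → S)) [IsProbabilityMeasure μ]
    (hiid : ∀ (n : ℕ) (A : Fin n → Set S),
      μ {γ | ∀ i : Fin n, γ i ∈ A i} = ∏ i, ν (A i))
    (P : Pt) :
    -- `P` is almost surely wandering iff `E_ν̄[ĥ](Q) > 0` for all `Q ∈ Orb_S(P)`:
    (μ {γ | (seqOrbit F P γ).Finite} = 0 ↔
      ∀ Q ∈ totalOrbit F P, 0 < ∫ γ, hhat F deg h γ Q ∂μ) ∧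
    -- equivalently, `P` fails to be almost surely wandering iff some point of
    -- `Orb_S(P)` has finite `S`-orbit:
    (¬ μ {γ | (seqOrbit F P γ).Finite} = 0 ↔
      ∃ Q ∈ totalOrbit F P, (totalOrbit F Q).Finite) := by
  -- `S` is nonempty
  have hSne : Nonempty S := by
    by_contra hS
    rw [not_nonempty_iff] at hS
    have h1 : ν (Set.univ : Set S) = 1 := measure_univ
    rw [Set.univ_eq_empty_iff.mpr hS, measure_empty] at h1
    exact zero_ne_one h1
  obtain ⟨s0⟩ := hSne
  have hC0 : 0 ≤ C := le_trans (abs_nonneg _) (hC s0 P)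
  -- the set of non-wandering sequences is the set of bounded-height sequences
  have hEq : {γ : ℕ → S | (seqOrbit F P γ).Finite}
      = {γ : ℕ → S | ∀ n, h (seqComp F γ n • P) ≤ C} := by
    ext γ
    constructor
    · intro hfin
      exact height_le_of_hhat_eq_zero F deg h hdeg_id hdeg_comp hdeg2 C hC γ P hC0
        (hhat_eq_zero_of_finite F deg h hdeg_id hdeg_comp hdeg2 hheight_nonneg C hC γ P
          hC0 hfin)
    · intro hγ
      apply (hNorthcott P C).subset
      rintro _ ⟨n, rfl⟩
      exact ⟨seqOrbit_subset_totalOrbit F P γ ⟨n, rfl⟩, hγ n⟩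
  -- measurability of the canonical height
  have hmeas : ∀ Q : Pt, Measurable (fun γ : ℕ → S => hhat F deg h γ Q) := by
    intro Q
    apply measurable_of_tendsto_metrizable (f := fun n γ => hq F deg h γ Q n)
    · intro n
      have heq : (fun γ : ℕ → S => hq F deg h γ Q n)
          = (fun u : Fin n → S => hq F deg h (extSeq s0 n u) Q n)
            ∘ (fun γ (i : Fin n) => γ (i : ℕ)) := by
        funext γ
        show hq F deg h γ Q n = hq F deg h (extSeq s0 n (fun i : Fin n => γ (i : ℕ))) Q n
        rw [hq, hq, seqComp_congr F
          (γ := γ) (γ' := extSeq s0 n (fun i : Fin n => γ (i : ℕ)))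
          (fun i hi => by rw [extSeq_eq s0 n _ i hi])]
      rw [heq]
      exact (measurable_of_countable _).comp
        (measurable_pi_lambda _ fun i => measurable_pi_apply _)
    · rw [tendsto_pi_nhds]
      intro γ
      exact tendsto_hq_hhat F deg h hdeg_id hdeg_comp hdeg2 C hC γ Q hC0
  -- integrability of the canonical height
  have hint : ∀ Q : Pt, Integrable (fun γ : ℕ → S => hhat F deg h γ Q) μ := by
    intro Q
    refine ⟨(hmeas Q).aestronglyMeasurable, HasFiniteIntegral.of_bounded
      (C := h Q + C) (ae_of_all _ fun γ => ?_)⟩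
    rw [Real.norm_eq_abs, abs_of_nonneg
      (hhat_nonneg F deg h hdeg_id hdeg_comp hdeg2 hheight_nonneg C hC γ Q hC0)]
    exact hhat_le F deg h hdeg_id hdeg_comp hdeg2 C hC γ Q hC0
  -- vanishing of the expected canonical height = a.e. vanishing
  have hae : ∀ Q : Pt, (∫ γ, hhat F deg h γ Q ∂μ) = 0 →
      ∀ᵐ γ ∂μ, hhat F deg h γ Q = 0 := by
    intro Q hE0
    have := (integral_eq_zero_iff_of_nonneg
      (fun γ => hhat_nonneg F deg h hdeg_id hdeg_comp hdeg2 hheight_nonneg C hC γ Q hC0)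
      (hint Q)).mp hE0
    filter_upwards [this] with γ hγ using hγ
  -- a positive measure set meets an a.e. set
  have hmeet : ∀ (A B : Set (ℕ → S)), μ A ≠ 0 → (∀ᵐ γ ∂μ, γ ∈ B) →
      (A ∩ B).Nonempty := by
    intro A B hA hB
    rw [Set.nonempty_iff_ne_empty]
    intro hAB
    apply hA
    refine measure_mono_null (fun γ hγA => ?_) (ae_iff.mp hB)
    show ¬ γ ∈ B
    intro hγB
    exact Set.eq_empty_iff_forall_notMem.mp hAB γ ⟨hγA, hγB⟩
  -- zero expected height forces a finite total orbit
  have hzeroFin : ∀ Q : Pt, (∫ γ, hhat F deg h γ Q ∂μ) = 0 → (totalOrbit F Q).Finite := by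
    intro Q hE0
    have hae' := hae Q hE0
    apply (hNorthcott Q C).subset
    rintro _ ⟨_, ⟨γ', rfl⟩, m, rfl⟩
    refine ⟨⟨_, ⟨γ', rfl⟩, m, rfl⟩, ?_⟩
    obtain ⟨γ'', hA, hB⟩ := hmeet (cylSet m (fun i => γ' (i : ℕ)))
      {γ | hhat F deg h γ Q = 0} (cylSet_measure_ne_zero ν μ hiid hpos m _) hae'
    have hsc : seqComp F γ'' m = seqComp F γ' m :=
      seqComp_congr F fun i hi => hA ⟨i, hi⟩
    have hle := height_le_of_hhat_eq_zero F deg h hdeg_id hdeg_comp hdeg2 C hC γ'' Q hC0 hB m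
    rwa [hsc] at hle
  -- a point of the orbit with finite orbit gives positive measure of non-wandering
  have hFinPos : ∀ Q ∈ totalOrbit F P, (totalOrbit F Q).Finite →
      μ {γ | (seqOrbit F P γ).Finite} ≠ 0 := by
    rintro _ ⟨_, ⟨w', rfl⟩, nn, rfl⟩ hfin hμ0
    apply cylSet_measure_ne_zero ν μ hiid hpos nn (fun i => w' (i : ℕ))
    apply measure_mono_null (fun γ hγ => ?_) hμ0
    have hsc : seqComp F γ nn = seqComp F w' nn :=
      seqComp_congr F fun i hi => hγ ⟨i, hi⟩
    apply Set.Finite.subset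
      (Set.Finite.union ((Set.finite_Iic nn).image fun m => seqComp F γ m • P) hfin)
    rintro _ ⟨m, rfl⟩
    by_cases hm : m ≤ nn
    · exact Set.mem_union_left _ ⟨m, Set.mem_Iic.mpr hm, rfl⟩
    · apply Set.mem_union_right
      have hm' : m = nn + (m - nn) := by omega
      show seqComp F γ m • P ∈ totalOrbit F (seqComp F w' nn • P)
      rw [hm', seqComp_add, mul_smul, hsc]
      exact ⟨_, ⟨fun i => γ (nn + i), rfl⟩, m - nn, rfl⟩
  -- finite total orbit gives zero expected height
  have hEzero : ∀ Q : Pt, (totalOrbit F Q).Finite → (∫ γ, hhat F deg h γ Q ∂μ) = 0 := by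
    intro Q hfin
    have hz : (fun γ : ℕ → S => hhat F deg h γ Q) = fun _ => 0 := funext fun γ =>
      hhat_eq_zero_of_finite F deg h hdeg_id hdeg_comp hdeg2 hheight_nonneg C hC γ Q hC0
        (hfin.subset (seqOrbit_subset_totalOrbit F Q γ))
    rw [hz, integral_zero]
  -- the main escape consequence
  have hkey : μ {γ | (seqOrbit F P γ).Finite} ≠ 0 →
      ∃ Q ∈ totalOrbit F P, (totalOrbit F Q).Finite := by
    intro hne
    rw [hEq] at hne
    obtain ⟨Q, hQ, hle⟩ := key_escape F h C P s0 (hNorthcott P C) ν hpos μ hiid hne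
    exact ⟨Q, hQ, (hNorthcott Q C).subset fun R hR => ⟨hR, hle R hR⟩⟩
  constructor
  · constructor
    · intro h0 Q hQ
      by_contra hlt
      have hE0 : (∫ γ, hhat F deg h γ Q ∂μ) = 0 :=
        le_antisymm (not_lt.mp hlt) (integral_nonneg fun γ =>
          hhat_nonneg F deg h hdeg_id hdeg_comp hdeg2 hheight_nonneg C hC γ Q hC0)
      exact hFinPos Q hQ (hzeroFin Q hE0) h0
    · intro hall
      by_contra hne
      obtain ⟨Q, hQ, hfin⟩ := hkey hne
      have hgt := hall Q hQ
      rw [hEzero Q hfin] at hgt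
      exact lt_irrefl 0 hgt
  · constructor
    · exact hkey
    · rintro ⟨Q, hQ, hfin⟩
      exact hFinPos Q hQ hfin
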